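/- Let (M, 𝒜) be an uncertainty matroid on a finite ground set E, let e ∈ E be a colored uncertain element, and let f ∈ E − e. (i) If e is blue and f is blue (resp. red) in (M, 𝒜), then f is blue (resp. red) in (M/e, 𝒜|_{E−e}). (ii) If e is red and f is blue (resp. red) in (M, 𝒜), then f is blue (resp. red) in (M\e, 𝒜|_{E−e}). -/

import Mathlib

open Matroid

variable {α : Type*}

/-- `A` is an uncertainty area function for `M`: each element of the ground set gets a
nonempty bounded set of reals. -/
def IsAreaFun (M : Matroid α) (A : α → Set ℝ) : Prop :=
  ∀ e ∈ M.E, (A e).Nonempty ∧ BddBelow (A e) ∧ BddAbove (A e)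

/-- A realization: a weight function with `w e ∈ A e` for every element of the ground set. -/
def Realization (M : Matroid α) (A : α → Set ℝ) (w : α → ℝ) : Prop :=
  ∀ e ∈ M.E, w e ∈ A e

/-- The total `w`-weight of a set. -/
noncomputable def setWeight (w : α → ℝ) (T : Set α) : ℝ := ∑ᶠ e ∈ T, w e

/-- A `w`-basis: a basis of `M` of minimum total `w`-weight. -/
def IsMinBasis (M : Matroid α) (w : α → ℝ) (T : Set α) : Prop :=
  M.IsBase T ∧ ∀ B, M.IsBase B → setWeight w T ≤ setWeight w B

/-- A uniformly optimal basis (an `A`-basis): a `w`-basis for every realization `w`. -/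
def IsUOB (M : Matroid α) (A : α → Set ℝ) (T : Set α) : Prop :=
  ∀ w, Realization M A w → IsMinBasis M w T

/-- An element is certain if its area is a singleton. -/
def Certain (A : α → Set ℝ) (e : α) : Prop := ∃ r : ℝ, A e = {r}

/-- `e` is blue if every realization admits a minimum weight basis containing `e`. -/
def Blue (M : Matroid α) (A : α → Set ℝ) (e : α) : Prop :=
  ∀ w, Realization M A w → ∃ T, IsMinBasis M w T ∧ e ∈ T

/-- `e` is red if every realization admits a minimum weight basis avoiding `e`. -/
def Red (M : Matroid α) (A : α → Set ℝ) (e : α) : Prop :=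
  ∀ w, Realization M A w → ∃ T, IsMinBasis M w T ∧ e ∉ T

/-- `e` is colored if it is blue or red. -/
def Colored (M : Matroid α) (A : α → Set ℝ) (e : α) : Prop :=
  Blue M A e ∨ Red M A e

/-- Deletion of a set of elements from a matroid. -/
def Matroid.del (M : Matroid α) (D : Set α) : Matroid α := M ↾ (M.E \ D)

/-- Contraction of a set of elements in a matroid, defined by duality. -/
def Matroid.con (M : Matroid α) (C : Set α) : Matroid α := (M✶.del C)✶

open Set

variable {M : Matroid α}

lemma setWeight_congr {w w' : α → ℝ} {T : Set α} (h : ∀ x ∈ T, w x = w' x) :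
    setWeight w T = setWeight w' T :=
  finsum_mem_congr rfl h

lemma setWeight_insert {e : α} {w : α → ℝ} {T : Set α} (hT : T.Finite) (he : e ∉ T) :
    setWeight w (insert e T) = w e + setWeight w T :=
  finsum_mem_insert w he hT


lemma del_base_iff {M : Matroid α} {e : α} {T0 B : Set α}
    (hT0 : M.IsBase T0) (heT0 : e ∉ T0) :
    (M.del {e}).IsBase B ↔ M.IsBase B ∧ e ∉ B := by
  rw [Matroid.del, Matroid.isBase_restrict_iff diff_subset]
  constructor
  · intro h
    obtain ⟨B', hB', hBB'⟩ := h.indep.exists_isBase_superset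
    have hBE : B ⊆ M.E \ {e} := h.subset
    have heB : e ∉ B := fun hh => (hBE hh).2 rfl
    have hdiff : B' \ B ⊆ {e} := by
      intro x hx
      by_contra hxe
      have hx' : insert x B = B := (h.eq_of_subset_indep
        (hB'.indep.subset (insert_subset hx.1 hBB')) (subset_insert _ _)
        (insert_subset ⟨hB'.subset_ground hx.1, hxe⟩ hBE)).symm
      exact hx.2 (hx' ▸ mem_insert x B)
    by_cases hcase : e ∈ B'
    · exfalso
      obtain ⟨g, hg, hgB⟩ := hB'.exchange hT0 ⟨hcase, heT0⟩
      have hB'e : B' \ {e} = B := by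
        apply Subset.antisymm
        · intro x hx
          rcases em (x ∈ B) with h' | h'
          · exact h'
          · exact absurd (hdiff ⟨hx.1, h'⟩) hx.2
        · exact fun x hx => ⟨hBB' hx, fun h' => heB (h' ▸ hx)⟩
      rw [hB'e] at hgB
      have hge : g ≠ e := fun h' => heT0 (h' ▸ hg.1)
      have hgBmem : g ∉ B := fun h' => hg.2 (hBB' h')
      have hx' : insert g B = B := (h.eq_of_subset_indep hgB.indep (subset_insert _ _)
        (insert_subset ⟨hT0.subset_ground hg.1, hge⟩ hBE)).symm
      exact hgBmem (hx' ▸ mem_insert g B)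
    · have hBB : B' = B := by
        apply Subset.antisymm _ hBB'
        intro x hx
        rcases em (x ∈ B) with h' | h'
        · exact h'
        · have hxe := hdiff ⟨hx, h'⟩
          rw [mem_singleton_iff] at hxe
          exact absurd (hxe ▸ hx) hcase
      exact ⟨hBB ▸ hB', heB⟩
  · rintro ⟨hB, heB⟩
    rw [isBasis_iff diff_subset]
    exact ⟨hB.indep, subset_diff_singleton hB.subset_ground heB,
      fun J hJ hBJ _ => hB.eq_of_subset_indep hJ hBJ⟩


lemma con_base_iff {M : Matroid α} {e : α} {T0 B : Set α}
    (hT0 : M.IsBase T0) (heT0 : e ∈ T0) :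
    (M.con {e}).IsBase B ↔ B ⊆ M.E \ {e} ∧ M.IsBase (insert e B) := by
  have hd : M✶.IsBase (M.E \ T0) := hT0.compl_isBase_dual
  have heE : e ∈ M.E := hT0.subset_ground heT0
  rw [Matroid.con, Matroid.dual_isBase_iff']
  have hg : (M✶.del {e}).E = M.E \ {e} := rfl
  rw [hg, del_base_iff hd (fun h => h.2 heT0), Matroid.dual_isBase_iff']
  constructor
  · rintro ⟨⟨⟨hb, hsub⟩, -⟩, hBsub⟩
    refine ⟨hBsub, ?_⟩
    convert hb using 1
    ext x
    simp only [mem_insert_iff, mem_diff, mem_singleton_iff]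
    constructor
    · rintro (rfl | hx)
      · exact ⟨heE, fun h => (h.1.2 rfl).elim⟩
      · exact ⟨(hBsub hx).1, fun h => h.2 hx⟩
    · rintro ⟨hxE, hx⟩
      by_cases hxe : x = e
      · exact Or.inl hxe
      · exact Or.inr (by_contra fun hxB => hx ⟨⟨hxE, hxe⟩, hxB⟩)
  · rintro ⟨hBsub, hb⟩
    refine ⟨⟨⟨?_, diff_subset.trans diff_subset⟩, fun h => (h.1.2 rfl).elim⟩, hBsub⟩
    convert hb using 1
    ext x
    simp only [mem_insert_iff, mem_diff, mem_singleton_iff]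
    constructor
    · rintro ⟨hxE, hx⟩
      by_cases hxe : x = e
      · exact Or.inl hxe
      · exact Or.inr (by_contra fun hxB => hx ⟨⟨hxE, hxe⟩, hxB⟩)
    · rintro (rfl | hx)
      · exact ⟨heE, fun h => (h.1.2 rfl).elim⟩
      · exact ⟨(hBsub hx).1, fun h => h.2 hx⟩

lemma con_key {M : Matroid α} {A : α → Set ℝ} (hE : M.E.Finite) {e : α} {a b : ℝ}
    (ha : a ∈ A e) (hb : b ∈ A e) (hab : a < b) (hblue : Blue M A e)
    (Q : Set α → Prop) (hQ : ∀ T, Q T → Q (T \ {e}))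
    (h : ∀ w, Realization M A w → ∃ T, IsMinBasis M w T ∧ Q T) :
    ∀ w, Realization (M.con {e}) A w → ∃ T, IsMinBasis (M.con {e}) w T ∧ Q T := by
  intro w hw
  classical
  have hreal : ∀ c : ℝ, c ∈ A e → Realization M A (Function.update w e c) := by
    intro c hc x hx
    by_cases hxe : x = e
    · subst hxe; simpa using hc
    · rw [Function.update_of_ne hxe]
      exact hw x ⟨hx, hxe⟩
  set wa := Function.update w e a with hwa_def
  set wb := Function.update w e b with hwb_def
  obtain ⟨T', hT', heT'⟩ := hblue wb (hreal b hb)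
  obtain ⟨T, hT, hQT⟩ := h wa (hreal a ha)
  have hagree : ∀ x, x ≠ e → wa x = wb x := fun x hx => by
    rw [hwa_def, hwb_def, Function.update_of_ne hx, Function.update_of_ne hx]
  have hwagree : ∀ x, x ≠ e → wa x = w x := fun x hx => by
    rw [hwa_def, Function.update_of_ne hx]
  have hfinT' : (T' \ {e}).Finite := hE.subset (diff_subset.trans hT'.1.subset_ground)
  have hT'ins : insert e (T' \ {e}) = T' := by
    rw [insert_diff_singleton, insert_eq_self.2 heT']
  have heT : e ∈ T := by
    by_contra heT
    have h1 : setWeight wa T ≤ setWeight wa T' := hT.2 T' hT'.1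
    have h2 : setWeight wa T = setWeight wb T :=
      setWeight_congr fun x hx => hagree x fun h' => heT (h' ▸ hx)
    have h3 : setWeight wb T' ≤ setWeight wb T := hT'.2 T hT.1
    have h4 : setWeight wa (T' \ {e}) = setWeight wb (T' \ {e}) :=
      setWeight_congr fun x hx => hagree x fun h' => hx.2 (by simp [h'])
    have h5 : setWeight wa T' = a + setWeight wa (T' \ {e}) := by
      rw [← hT'ins, setWeight_insert hfinT' (fun h' => h'.2 rfl)]
      simp [hwa_def]
    have h6 : setWeight wb T' = b + setWeight wb (T' \ {e}) := by
      rw [← hT'ins, setWeight_insert hfinT' (fun h' => h'.2 rfl)]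
      simp [hwb_def]
    linarith
  have hfinT : (T \ {e}).Finite := hE.subset (diff_subset.trans hT.1.subset_ground)
  have hTins : insert e (T \ {e}) = T := by
    rw [insert_diff_singleton, insert_eq_self.2 heT]
  have hbase : (M.con {e}).IsBase (T \ {e}) := by
    rw [con_base_iff hT'.1 heT']
    exact ⟨diff_subset_diff_left hT.1.subset_ground, by rw [hTins]; exact hT.1⟩
  have k3 : setWeight wa T = a + setWeight w (T \ {e}) := by
    rw [← hTins, setWeight_insert hfinT (fun h' => h'.2 rfl)]
    have : setWeight wa (T \ {e}) = setWeight w (T \ {e}) :=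
      setWeight_congr fun x hx => hwagree x fun h' => hx.2 (by simp [h'])
    rw [this]; simp [hwa_def]
  refine ⟨T \ {e}, ⟨hbase, ?_⟩, hQ T hQT⟩
  intro B' hB'
  rw [con_base_iff hT'.1 heT'] at hB'
  obtain ⟨hB'sub, hB'base⟩ := hB'
  have heB' : e ∉ B' := fun h' => (hB'sub h').2 rfl
  have hfinB' : B'.Finite := hE.subset (hB'sub.trans diff_subset)
  have k1 : setWeight wa T ≤ setWeight wa (insert e B') := hT.2 _ hB'base
  have k2 : setWeight wa (insert e B') = a + setWeight w B' := by
    rw [setWeight_insert hfinB' heB']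
    have : setWeight wa B' = setWeight w B' :=
      setWeight_congr fun x hx => hwagree x fun h' => heB' (h' ▸ hx)
    rw [this]; simp [hwa_def]
  linarith

lemma del_key {M : Matroid α} {A : α → Set ℝ} (hE : M.E.Finite) {e : α} {a b : ℝ}
    (ha : a ∈ A e) (hb : b ∈ A e) (hab : a < b) (hred : Red M A e)
    (Q : Set α → Prop)
    (h : ∀ w, Realization M A w → ∃ T, IsMinBasis M w T ∧ Q T) :
    ∀ w, Realization (M.del {e}) A w → ∃ T, IsMinBasis (M.del {e}) w T ∧ Q T := by
  intro w hw
  classical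
  have hreal : ∀ c : ℝ, c ∈ A e → Realization M A (Function.update w e c) := by
    intro c hc x hx
    by_cases hxe : x = e
    · subst hxe; simpa using hc
    · rw [Function.update_of_ne hxe]
      exact hw x ⟨hx, hxe⟩
  set wa := Function.update w e a with hwa_def
  set wb := Function.update w e b with hwb_def
  obtain ⟨T', hT', heT'⟩ := hred wa (hreal a ha)
  obtain ⟨T, hT, hQT⟩ := h wb (hreal b hb)
  have hagree : ∀ x, x ≠ e → wa x = wb x := fun x hx => by
    rw [hwa_def, hwb_def, Function.update_of_ne hx, Function.update_of_ne hx]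
  have hwagree : ∀ x, x ≠ e → wb x = w x := fun x hx => by
    rw [hwb_def, Function.update_of_ne hx]
  have heT : e ∉ T := by
    intro heT
    have hfinT : (T \ {e}).Finite := hE.subset (diff_subset.trans hT.1.subset_ground)
    have hTins : insert e (T \ {e}) = T := by
      rw [insert_diff_singleton, insert_eq_self.2 heT]
    have h1 : setWeight wb T ≤ setWeight wb T' := hT.2 T' hT'.1
    have h2 : setWeight wb T' = setWeight wa T' :=
      setWeight_congr fun x hx => (hagree x fun h' => heT' (h' ▸ hx)).symm
    have h3 : setWeight wa T' ≤ setWeight wa T := hT'.2 T hT.1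
    have h4 : setWeight wa (T \ {e}) = setWeight wb (T \ {e}) :=
      setWeight_congr fun x hx => hagree x fun h' => hx.2 (by simp [h'])
    have h5 : setWeight wa T = a + setWeight wa (T \ {e}) := by
      rw [← hTins, setWeight_insert hfinT (fun h' => h'.2 rfl)]
      simp [hwa_def]
    have h6 : setWeight wb T = b + setWeight wb (T \ {e}) := by
      rw [← hTins, setWeight_insert hfinT (fun h' => h'.2 rfl)]
      simp [hwb_def]
    linarith
  have hwT : setWeight w T = setWeight wb T :=
    (setWeight_congr fun x hx => hwagree x fun h' => heT (h' ▸ hx)).symm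
  refine ⟨T, ⟨(del_base_iff hT'.1 heT').2 ⟨hT.1, heT⟩, ?_⟩, hQT⟩
  intro B' hB'
  rw [del_base_iff hT'.1 heT'] at hB'
  have hwB' : setWeight wb B' = setWeight w B' :=
    setWeight_congr fun x hx => hwagree x fun h' => hB'.2 (h' ▸ hx)
  rw [hwT, ← hwB']
  exact hT.2 B' hB'.1

/-- Contracting a blue uncertain element or deleting a red uncertain element
preserves the colors of the other elements. -/
theorem color_preserved_minor (M : Matroid α) (A : α → Set ℝ)
    (hE : M.E.Finite) (hA : IsAreaFun M A)
    (e : α) (he : e ∈ M.E) (hu : ¬ Certain A e) (hc : Colored M A e)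
    (f : α) (hf : f ∈ M.E) (hfe : f ≠ e) :
    (Blue M A e → Blue M A f → Blue (M.con {e}) A f) ∧
    (Blue M A e → Red M A f → Red (M.con {e}) A f) ∧
    (Red M A e → Blue M A f → Blue (M.del {e}) A f) ∧
    (Red M A e → Red M A f → Red (M.del {e}) A f) := by
  obtain ⟨⟨a0, ha0⟩, -, -⟩ := hA e he
  have hex : ∃ b0 ∈ A e, b0 ≠ a0 := by
    by_contra hcon
    push_neg at hcon
    exact hu ⟨a0, Set.eq_singleton_iff_unique_mem.2 ⟨ha0, hcon⟩⟩
  obtain ⟨b0, hb0, hb0ne⟩ := hex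
  obtain ⟨a, b, ha, hb, hab⟩ : ∃ a b, a ∈ A e ∧ b ∈ A e ∧ a < b := by
    rcases hb0ne.lt_or_gt with h' | h'
    · exact ⟨b0, a0, hb0, ha0, h'⟩
    · exact ⟨a0, b0, ha0, hb0, h'⟩
  refine ⟨?_, ?_, ?_, ?_⟩
  · intro hbe hbf
    exact con_key hE ha hb hab hbe (fun T => f ∈ T)
      (fun T hT => ⟨hT, fun h' => hfe h'⟩) hbf
  · intro hbe hrf
    exact con_key hE ha hb hab hbe (fun T => f ∉ T) (fun T hT h' => hT h'.1) hrf
  · intro hre hbf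
    exact del_key hE ha hb hab hre (fun T => f ∈ T) hbf
  · intro hre hrf
    exact del_key hE ha hb hab hre (fun T => f ∉ T) hrf
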